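/- The block-doubling step preserves the total population count: if x is a sum ∑_{i=0}^{m-1} c_i · 2^(i·2^(k+1)) with each c_i < 2^(2^(k+1)), and y = (x AND m) + ((x / 2^(2^k)) AND m) with m the mask selecting the low 2^k bits of each 2^(k+1)-bit block, then the sum of the 2^(k+1)-bit blocks of y equals ∑ c_i-low-halves + ∑ c_i-high-halves, i.e., the sum of all 2^k-bit sub-blocks of x. -/

import Mathlib

private lemma land_split {B a b x y : ℕ} (ha : a < 2 ^ B) (hb : b < 2 ^ B) :
    (a + 2 ^ B * x) &&& (b + 2 ^ B * y) = (a &&& b) + 2 ^ B * (x &&& y) := by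
  have hab : a &&& b < 2 ^ B := lt_of_le_of_lt Nat.and_le_left ha
  apply Nat.eq_of_testBit_eq
  intro j
  rw [Nat.add_comm a, Nat.add_comm b, Nat.add_comm (a &&& b), Nat.testBit_and,
    Nat.testBit_two_pow_mul_add _ ha, Nat.testBit_two_pow_mul_add _ hb,
    Nat.testBit_two_pow_mul_add _ hab, Nat.testBit_and, Nat.testBit_and]
  by_cases h : j < B <;> simp [h]

private lemma land_blocks (B : ℕ) : ∀ (M : ℕ) (c d : ℕ → ℕ),
    (∀ i < M, c i < 2 ^ B) → (∀ i < M, d i < 2 ^ B) →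
    (∑ i ∈ Finset.range M, c i * (2 ^ B) ^ i) &&& (∑ i ∈ Finset.range M, d i * (2 ^ B) ^ i)
      = ∑ i ∈ Finset.range M, (c i &&& d i) * (2 ^ B) ^ i := by
  intro M
  induction M with
  | zero => simp
  | succ M ih =>
    intro c d hc hd
    rw [Finset.sum_range_succ', Finset.sum_range_succ', Finset.sum_range_succ']
    have reshape : ∀ e : ℕ → ℕ,
        (∑ i ∈ Finset.range M, e (i + 1) * (2 ^ B) ^ (i + 1)) + e 0 * (2 ^ B) ^ 0
          = e 0 + 2 ^ B * ∑ i ∈ Finset.range M, e (i + 1) * (2 ^ B) ^ i := by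
      intro e
      rw [Finset.mul_sum, add_comm, pow_zero, mul_one]
      congr 1
      exact Finset.sum_congr rfl fun i _ => by rw [pow_succ']; ring
    simp only [reshape]
    rw [land_split (hc 0 (by omega)) (hd 0 (by omega)),
      ih (fun i => c (i + 1)) (fun i => d (i + 1)) (fun i hi => hc _ (by omega))
        (fun i hi => hd _ (by omega))]
    exact (reshape fun i => c i &&& d i).symm

private lemma sum_blocks_lt (b : ℕ) (hb : 0 < b) : ∀ (M : ℕ) (c : ℕ → ℕ),
    (∀ i < M, c i < b) → ∑ i ∈ Finset.range M, c i * b ^ i < b ^ M := by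
  intro M
  induction M with
  | zero => simp
  | succ M ih =>
    intro c hc
    rw [Finset.sum_range_succ]
    have h1 : ∑ i ∈ Finset.range M, c i * b ^ i < b ^ M :=
      ih c fun i hi => hc i (by omega)
    have h2 : c M * b ^ M ≤ (b - 1) * b ^ M :=
      Nat.mul_le_mul_right _ (by have := hc M (by omega); omega)
    have h3 : b ^ M + (b - 1) * b ^ M = b ^ (M + 1) := by
      rw [pow_succ, mul_comm (b ^ M) b]
      cases b with
      | zero => omega
      | succ n => simp [Nat.succ_sub_one]; ring
    omega

private lemma decompose (b : ℕ) (hb : 0 < b) : ∀ (M n : ℕ), n < b ^ M →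
    n = ∑ i ∈ Finset.range M, (n / b ^ i % b) * b ^ i := by
  intro M
  induction M with
  | zero => intro n hn; simpa using Nat.lt_one_iff.mp (by simpa using hn)
  | succ M ih =>
    intro n hn
    have h1 : n / b < b ^ M := by
      rw [Nat.div_lt_iff_lt_mul hb, ← pow_succ]; exact hn
    rw [Finset.sum_range_succ']
    have h2 : ∑ i ∈ Finset.range M, (n / b ^ (i + 1) % b) * b ^ (i + 1)
        = b * (n / b) := by
      have h3 : ∑ i ∈ Finset.range M, (n / b ^ (i + 1) % b) * b ^ (i + 1)
          = b * ∑ i ∈ Finset.range M, (n / b / b ^ i % b) * b ^ i := by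
        rw [Finset.mul_sum]
        refine Finset.sum_congr rfl fun i _ => ?_
        rw [pow_succ', ← Nat.div_div_eq_div_mul]
        ring
      rw [h3, ← ih (n / b) h1]
    rw [h2]
    simp only [pow_zero, Nat.div_one, mul_one]
    exact (Nat.div_add_mod n b).symm

private lemma extract (b : ℕ) (hb : 0 < b) : ∀ (M : ℕ) (d : ℕ → ℕ),
    (∀ i < M, d i < b) → ∀ j < M,
      (∑ i ∈ Finset.range M, d i * b ^ i) / b ^ j % b = d j := by
  intro M
  induction M with
  | zero => intro d _ j hj; omega
  | succ M ih =>
    intro d hd j hj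
    rw [Finset.sum_range_succ']
    have hS : (∑ i ∈ Finset.range M, d (i + 1) * b ^ (i + 1)) + d 0 * b ^ 0
        = d 0 + b * ∑ i ∈ Finset.range M, d (i + 1) * b ^ i := by
      rw [Finset.mul_sum, add_comm, pow_zero, mul_one]
      congr 1
      exact Finset.sum_congr rfl fun i _ => by rw [pow_succ']; ring
    rw [hS]
    cases j with
    | zero =>
      simp only [pow_zero, Nat.div_one]
      rw [Nat.add_mul_mod_self_left]
      exact Nat.mod_eq_of_lt (hd 0 (by omega))
    | succ j =>
      rw [pow_succ', ← Nat.div_div_eq_div_mul,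
        Nat.add_mul_div_left _ _ hb, Nat.div_eq_of_lt (hd 0 (by omega)), Nat.zero_add]
      exact ih (fun i => d (i + 1)) (fun i hi => hd (i + 1) (by omega)) j (by omega)

/-- The block-doubling step preserves the total count: the sum of the
`2^(k+1)`-bit blocks of `y = (x AND m) + ((x / 2^(2^k)) AND m)` equals the sum
of the low halves plus the sum of the high halves of the blocks of `x`. -/
theorem block_doubling_preserves_sum (k M : ℕ) (c : ℕ → ℕ)
    (hc : ∀ i < M, c i < 2 ^ (2 ^ (k + 1)))
    (x m y : ℕ)
    (hx : x = ∑ i ∈ Finset.range M, c i * 2 ^ (i * 2 ^ (k + 1)))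
    (hm : m = ∑ j ∈ Finset.range M, (2 ^ (2 ^ k) - 1) * 2 ^ (j * 2 ^ (k + 1)))
    (hy : y = (x &&& m) + ((x / 2 ^ (2 ^ k)) &&& m)) :
    (∑ i ∈ Finset.range M, (y / 2 ^ (i * 2 ^ (k + 1))) % 2 ^ (2 ^ (k + 1)))
      = (∑ i ∈ Finset.range M, c i % 2 ^ (2 ^ k))
        + ∑ i ∈ Finset.range M, c i / 2 ^ (2 ^ k) := by
  set s : ℕ := 2 ^ k with hs
  set W : ℕ := 2 ^ (k + 1) with hWdef
  have hspos : 0 < s := Nat.pow_pos (n := k) (by norm_num)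
  have hWs : W = s + s := by rw [hWdef, hs, pow_succ]; ring_nf
  have hPb : (2 : ℕ) ^ W = 2 ^ s * 2 ^ s := by rw [hWs, pow_add]
  have hq2 : (2 : ℕ) ≤ 2 ^ s := by
    calc (2 : ℕ) = 2 ^ 1 := by norm_num
    _ ≤ 2 ^ s := Nat.pow_le_pow_right (by norm_num) hspos
  have hPpos : 0 < (2 : ℕ) ^ W := Nat.pow_pos (n := W) (by norm_num)
  have hmask : 2 ^ s - 1 < 2 ^ W := by
    have h := Nat.le_mul_of_pos_left (2 ^ s) (show 0 < 2 ^ s by positivity)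
    omega
  have hpow : ∀ i : ℕ, (2 : ℕ) ^ (i * W) = (2 ^ W) ^ i := fun i => by
    rw [mul_comm, pow_mul]
  simp only [hpow] at hx hm ⊢
  have hspow : (2 : ℕ) ^ s - 1 = 2 ^ (2 ^ k) - 1 := by rw [hs]
  -- step 1 : x &&& m
  have hxm : x &&& m = ∑ i ∈ Finset.range M, (c i % 2 ^ s) * (2 ^ W) ^ i := by
    rw [hx, hm, land_blocks W M c (fun _ => 2 ^ s - 1) hc (fun _ _ => hmask)]
    exact Finset.sum_congr rfl fun i _ => by
      rw [hs, Nat.and_two_pow_sub_one_eq_mod]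
  -- blocks of x
  have hxblock : ∀ i < M, x / (2 ^ W) ^ i % 2 ^ W = c i := by
    intro i hi
    rw [hx]
    exact extract (2 ^ W) hPpos M c hc i hi
  have hxlt : x < (2 ^ W) ^ M := by
    rw [hx]; exact sum_blocks_lt (2 ^ W) hPpos M c hc
  -- step 2 : (x / 2^s) &&& m
  set g : ℕ → ℕ := fun i => x / 2 ^ s / (2 ^ W) ^ i % 2 ^ W with hgdef
  have hglt : ∀ i < M, g i < 2 ^ W := fun i _ => Nat.mod_lt _ hPpos
  have hgx : x / 2 ^ s = ∑ i ∈ Finset.range M, g i * (2 ^ W) ^ i := by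
    refine decompose (2 ^ W) hPpos M (x / 2 ^ s) ?_
    exact lt_of_le_of_lt (Nat.div_le_self _ _) hxlt
  have hgval : ∀ i < M, g i % 2 ^ s = c i / 2 ^ s := by
    intro i hi
    have e1 : x / 2 ^ s / (2 ^ W) ^ i = x / (2 ^ W) ^ i / 2 ^ s := by
      rw [Nat.div_div_eq_div_mul, Nat.div_div_eq_div_mul, mul_comm]
    have e2 : g i % 2 ^ s = x / (2 ^ W) ^ i / 2 ^ s % 2 ^ s := by
      rw [hgdef]
      simp only []
      rw [e1, hPb, Nat.mod_mod_of_dvd _ (Dvd.intro _ rfl)]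
    rw [e2, ← Nat.mod_mul_right_div_self, ← hPb, hxblock i hi]
  have hxsm : (x / 2 ^ s) &&& m
      = ∑ i ∈ Finset.range M, (c i / 2 ^ s) * (2 ^ W) ^ i := by
    rw [hgx, hm, land_blocks W M g (fun _ => 2 ^ s - 1) hglt (fun _ _ => hmask)]
    refine Finset.sum_congr rfl fun i hi => ?_
    rw [hs, Nat.and_two_pow_sub_one_eq_mod, ← hs, hgval i (Finset.mem_range.mp hi)]
  -- y as a block sum
  have hdig : ∀ i < M, c i % 2 ^ s + c i / 2 ^ s < 2 ^ W := by
    intro i hi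
    have h1 : c i % 2 ^ s < 2 ^ s := Nat.mod_lt _ (by positivity)
    have h2 : c i / 2 ^ s < 2 ^ s := by
      rw [Nat.div_lt_iff_lt_mul (by positivity), ← hPb]
      exact hc i hi
    have h3 := Nat.le_mul_of_pos_left (2 ^ s) (show 0 < 2 ^ s by positivity)
    have h4 := hq2
    nlinarith
  have hy' : y = ∑ i ∈ Finset.range M, (c i % 2 ^ s + c i / 2 ^ s) * (2 ^ W) ^ i := by
    rw [hy, hxm, hxsm, ← Finset.sum_add_distrib]
    exact Finset.sum_congr rfl fun i _ => by ring
  have hyblock : ∀ i < M, y / (2 ^ W) ^ i % 2 ^ W = c i % 2 ^ s + c i / 2 ^ s := by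
    intro i hi
    rw [hy']
    exact extract (2 ^ W) hPpos M _ hdig i hi
  rw [Finset.sum_congr rfl fun i hi => hyblock i (Finset.mem_range.mp hi),
    Finset.sum_add_distrib]
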